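/- Let p be a prime, f, g : F_p^n → ℂ, and let 𝓛 be a system of linear forms over F_p. Then the derivative at t = 0 of the map t ↦ t_𝓛(f + t·g) equals E_{X∈F_p^n}[g(X)·f^{∂𝓛}(X)]. -/

import Mathlib

open Filter Topology

noncomputable section

namespace Paper

/-- The average (expectation) of a complex-valued function over a finite type. -/
def expC {α : Type*} [Fintype α] (f : α → ℂ) : ℂ := (∑ x, f x) / (Fintype.card α : ℂ)

/-- The average (expectation) of a real-valued function over a finite type. -/
def expR {α : Type*} [Fintype α] (f : α → ℝ) : ℝ := (∑ x, f x) / (Fintype.card α : ℝ)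

variable (p : ℕ) [NeZero p]

/-- `e_p(m) = exp(2 π i m / p)`. -/
def ep (m : ZMod p) : ℂ :=
  Complex.exp (2 * (Real.pi : ℂ) * Complex.I * (m.val : ℂ) / (p : ℂ))

/-- The Gowers uniformity norm `‖f‖_{U^k}` of `f : F_p^n → ℂ`. -/
def gowersNorm (n k : ℕ) (f : (Fin n → ZMod p) → ℂ) : ℝ :=
  (norm (expC (fun xy : (Fin n → ZMod p) × (Fin k → Fin n → ZMod p) =>
      ∏ S : Finset (Fin k),
        (fun z => (starRingEnd ℂ) z)^[k - S.card] (f (xy.1 + ∑ i ∈ S, xy.2 i))))) ^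
    (((2 : ℝ) ^ k)⁻¹)

/-- Inner product `⟨f, g⟩ = 𝔼[f ⬝ conj g]`. -/
def inn (n : ℕ) (f g : (Fin n → ZMod p) → ℂ) : ℂ :=
  expC (fun x => f x * (starRingEnd ℂ) (g x))

/-- Correlation norm `‖f‖_{u(D)}` for a set `D` of complex-valued functions. -/
def uNormC (n : ℕ) (D : Set ((Fin n → ZMod p) → ℂ)) (f : (Fin n → ZMod p) → ℂ) : ℝ :=
  ⨆ g ∈ D, norm (inn p n f g)

/-- Correlation norm `‖f‖_{u(D)}` for a set `D` of `F_p`-valued functions. -/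
def uNormF (n : ℕ) (D : Set ((Fin n → ZMod p) → ZMod p)) (f : (Fin n → ZMod p) → ℂ) : ℝ :=
  ⨆ g ∈ D, norm (inn p n f (fun x => ep p (g x)))

/-- The bias of `f : F_p^n → F_p`. -/
def biasF (n : ℕ) (f : (Fin n → ZMod p) → ZMod p) : ℝ :=
  norm (expC (fun x => ep p (f x)))

/-- Evaluation of a linear form `L ∈ F_p^k` at `X ∈ (F_p^n)^k`. -/
def applyLF (n k : ℕ) (L : Fin k → ZMod p) (X : Fin k → Fin n → ZMod p) :
    Fin n → ZMod p := ∑ i, L i • X i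

/-- `t_𝓛(f)` for a system of linear forms given as a tuple `L`. -/
def tL (n k m : ℕ) (L : Fin m → Fin k → ZMod p) (f : (Fin n → ZMod p) → ℂ) : ℂ :=
  expC (fun X : Fin k → Fin n → ZMod p => ∏ i, f (applyLF p n k (L i) X))

/-- `t_𝓛(f)` for a real-valued function. -/
def tLR (n k m : ℕ) (L : Fin m → Fin k → ZMod p) (f : (Fin n → ZMod p) → ℝ) : ℝ :=
  expR (fun X : Fin k → Fin n → ZMod p => ∏ i, f (applyLF p n k (L i) X))

/-- `t_{𝓛,α}(f)`, the average with conjugations `α`. -/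
def tLA (n k m : ℕ) (L : Fin m → Fin k → ZMod p) (α : Fin m → Bool)
    (f : (Fin n → ZMod p) → ℂ) : ℂ :=
  expC (fun X : Fin k → Fin n → ZMod p =>
    ∏ i, if α i then (starRingEnd ℂ) (f (applyLF p n k (L i) X))
      else f (applyLF p n k (L i) X))

/-- `t*_{𝓛,β}(f)`, the average with coefficients `β ∈ F_p^m`. -/
def tLstar (n k m : ℕ) (L : Fin m → Fin k → ZMod p) (β : Fin m → ZMod p)
    (f : (Fin n → ZMod p) → ZMod p) : ℂ :=
  expC (fun X : Fin k → Fin n → ZMod p => ep p (∑ i, β i * f (applyLF p n k (L i) X)))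

/-- A system of linear forms is homogeneous if, for uniform `X`, the joint distribution of
`(L₁(X),…,L_m(X))` is invariant under simultaneous translation by any constant `c`. -/
def IsHomogeneous (k m : ℕ) (L : Fin m → Fin k → ZMod p) : Prop :=
  ∀ (n : ℕ) (c : Fin n → ZMod p) (y : Fin m → Fin n → ZMod p),
    {X : Fin k → Fin n → ZMod p | ∀ i, applyLF p n k (L i) X = y i}.ncard =
    {X : Fin k → Fin n → ZMod p | ∀ i, applyLF p n k (L i) X + c = y i}.ncard

/-- Cauchy–Schwarz complexity at most `s`. -/
def CSComplexityLE (k m : ℕ) (L : Fin m → Fin k → ZMod p) (s : ℕ) : Prop :=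
  ∀ i : Fin m, ∃ φ : Fin m → Fin (s + 1), ∀ c : Fin (s + 1),
    L i ∉ Submodule.span (ZMod p) (L '' {j | j ≠ i ∧ φ j = c})

/-- True complexity at most `d`. -/
def TrueComplexityLE (k m : ℕ) (L : Fin m → Fin k → ZMod p) (d : ℕ) : Prop :=
  ∀ ε : ℝ, 0 < ε → ∃ δ : ℝ, 0 < δ ∧ ∀ (n : ℕ) (f : (Fin n → ZMod p) → ℂ),
    (∀ x, norm (f x) ≤ 1) → gowersNorm p n (d + 1) f ≤ δ →
      norm (tL p n k m L f) ≤ ε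

/-- True complexity exactly `d`. -/
def TrueComplexityEq (k m : ℕ) (L : Fin m → Fin k → ZMod p) (d : ℕ) : Prop :=
  TrueComplexityLE p k m L d ∧ ∀ e, e < d → ¬ TrueComplexityLE p k m L e

/-- Iterated additive derivative of `P : F_p^n → F_p` in a list of directions. -/
def derivList (n : ℕ) :
    List (Fin n → ZMod p) → ((Fin n → ZMod p) → ZMod p) → ((Fin n → ZMod p) → ZMod p)
  | [], P => P
  | y :: ys, P => derivList n ys (fun x => P (x + y) - P x)

/-- `P` is a polynomial of degree at most `d`: all `(d+1)`-fold derivatives vanish. -/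
def DegLE (n : ℕ) (P : (Fin n → ZMod p) → ZMod p) (d : ℕ) : Prop :=
  ∀ ys : List (Fin n → ZMod p), ys.length = d + 1 → derivList p n ys P = 0

/-- `P` is a polynomial of degree exactly `d`. -/
def DegEq (n : ℕ) (P : (Fin n → ZMod p) → ZMod p) (d : ℕ) : Prop :=
  DegLE p n P d ∧ ∀ e, e < d → ¬ DegLE p n P e

/-- `rank(P) > r`: `P` cannot be written as a function of `r` polynomials of degree
at most `deg(P) − 1`. -/
def RankGT (n : ℕ) (P : (Fin n → ZMod p) → ZMod p) (r : ℕ) : Prop :=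
  ∀ d : ℕ, DegEq p n P d →
    ¬ ∃ (Q : Fin r → (Fin n → ZMod p) → ZMod p) (Γ : (Fin r → ZMod p) → ZMod p),
      (∀ i, DegLE p n (Q i) (d - 1)) ∧ ∀ x, P x = Γ (fun i => Q i x)

/-- `rank(P) ≥ r`. -/
def RankGE (n : ℕ) (P : (Fin n → ZMod p) → ZMod p) (r : ℕ) : Prop :=
  ∀ r' : ℕ, r' < r → RankGT p n P r'

/-- Extension of a function on `F_p^n` to `F_p^m` (`m ≥ n`) by ignoring the extra coordinates. -/
def extendFun {β : Type*} {n m : ℕ} (h : n ≤ m) (g : (Fin n → ZMod p) → β) :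
    (Fin m → ZMod p) → β := fun x => g (fun i => x (Fin.castLE h i))

/-- (A1) Consistency for `F_p`-valued families. -/
def ConsistentF (D : ∀ n : ℕ, Set ((Fin n → ZMod p) → ZMod p)) : Prop :=
  ∀ (n m : ℕ) (h : n ≤ m), ∀ g ∈ D n, extendFun p h g ∈ D m

/-- Consistency for unit-disc-valued families: `D_n ⊆ D_{n+1}`. -/
def ConsistentC (D : ∀ n : ℕ, Set ((Fin n → ZMod p) → ℂ)) : Prop :=
  ∀ n : ℕ, ∀ g ∈ D n, extendFun p (Nat.le_succ n) g ∈ D (n + 1)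

/-- (A2) Affine invariance. -/
def AffineInvariant (D : ∀ n : ℕ, Set ((Fin n → ZMod p) → ZMod p)) : Prop :=
  ∀ n : ℕ, ∀ g ∈ D n,
    ∀ (T : (Fin n → ZMod p) ≃ₗ[ZMod p] (Fin n → ZMod p)) (c : Fin n → ZMod p),
      (fun x => g (T x + c)) ∈ D n

/-- (A3) Sparsity: `|D_n| ≤ p^{ε p^n}` for every `ε > 0` and all large enough `n`. -/
def Sparse (D : ∀ n : ℕ, Set ((Fin n → ZMod p) → ZMod p)) : Prop :=
  ∀ ε : ℝ, 0 < ε → ∃ n₀ : ℕ, ∀ n, n₀ ≤ n →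
    (Nat.card (D n) : ℝ) ≤ (p : ℝ) ^ (ε * (p : ℝ) ^ n)

/-- A proper dual family: consistent, affine invariant and sparse. -/
def ProperDual (D : ∀ n : ℕ, Set ((Fin n → ZMod p) → ZMod p)) : Prop :=
  ConsistentF p D ∧ AffineInvariant p D ∧ Sparse p D

/-- The family `D` is correlation testable with `q` queries. -/
def CorrTestable (q : ℕ) (D : ∀ n : ℕ, Set ((Fin n → ZMod p) → ZMod p)) : Prop :=
  ∃ (Γ : (Fin q → ZMod p) → Bool) (μ : ∀ n : ℕ, (Fin q → Fin n → ZMod p) → ℝ),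
    (∀ n x, 0 ≤ μ n x) ∧ (∀ n, ∑ x, μ n x = 1) ∧
    ∀ ε : ℝ, 0 < ε → ∃ (δ θm θp : ℝ) (n₀ : ℕ),
      0 < δ ∧ δ < ε ∧ 0 ≤ θm ∧ θm < θp ∧ θp ≤ 1 ∧
      ∀ n, n₀ < n → ∀ f : (Fin n → ZMod p) → ZMod p,
        (ε ≤ uNormF p n (D n) (fun x => ep p (f x)) →
          θp ≤ ∑ x, μ n x * (if Γ (fun i => f (x i)) = true then 1 else 0)) ∧
        (uNormF p n (D n) (fun x => ep p (f x)) ≤ δ →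
          (∑ x, μ n x * (if Γ (fun i => f (x i)) = true then 1 else 0)) ≤ θm)

/-- Strong correlation testability by linear systems with true complexity `d` and
Cauchy–Schwarz complexity `s`. -/
def StronglyCorrTestable (D : ∀ n : ℕ, Set ((Fin n → ZMod p) → ℂ))
    (d s : ℕ) : Prop :=
  ∀ ε : ℝ, 0 < ε → ∃ (δ : ℝ) (n₀ ℓ : ℕ) (kk mm : Fin ℓ → ℕ)
      (L : ∀ i, Fin (mm i) → Fin (kk i) → ZMod p) (α : ∀ i, Fin (mm i) → Bool),
    0 < δ ∧ δ < ε ∧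
    (∀ i, Function.Injective (L i)) ∧
    (∀ i, IsHomogeneous p (kk i) (mm i) (L i)) ∧
    (∀ i, TrueComplexityLE p (kk i) (mm i) (L i) d) ∧
    (∀ i, CSComplexityLE p (kk i) (mm i) (L i) s) ∧
    Disjoint
      (closure {v : Fin ℓ → ℂ | ∃ (n : ℕ) (f : (Fin n → ZMod p) → ℂ),
        n₀ ≤ n ∧ (∀ x, norm (f x) ≤ 1) ∧ ε ≤ uNormC p n (D n) f ∧
        v = fun i => tLA p n (kk i) (mm i) (L i) (α i) f})
      (closure {v : Fin ℓ → ℂ | ∃ (n : ℕ) (f : (Fin n → ZMod p) → ℂ),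
        n₀ ≤ n ∧ (∀ x, norm (f x) ≤ 1) ∧ uNormC p n (D n) f ≤ δ ∧
        v = fun i => tLA p n (kk i) (mm i) (L i) (α i) f})

/-- `k ∈ S(D)`: there are polynomials of degree exactly `k` and arbitrarily high rank
with noticeable correlation with `D`. -/
def memS (D : ∀ n : ℕ, Set ((Fin n → ZMod p) → ℂ)) (k : ℕ) : Prop :=
  1 ≤ k ∧ ∀ r : ℕ → ℕ, Monotone r → ∃ n₀ a : ℕ, ∀ n, n₀ ≤ n →
    ∃ P : (Fin n → ZMod p) → ZMod p, DegEq p n P k ∧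
      (1 : ℝ) / (a : ℝ) ≤ uNormC p n (D n) (fun x => ep p (P x)) ∧
      RankGT p n P (r a)

/-- `Γ x` is a probability distribution on `F_p` for every `x`. -/
def IsDist (n : ℕ) (Γ : (Fin n → ZMod p) → ZMod p → ℝ) : Prop :=
  (∀ x c, 0 ≤ Γ x c) ∧ ∀ x, ∑ c, Γ x c = 1

/-- `a_c(μ) = E_{z ∼ μ}[e_p(c z)]`. -/
def aC (c : ZMod p) (μ : ZMod p → ℝ) : ℂ :=
  ∑ z : ZMod p, (μ z : ℂ) * ep p (c * z)

/-- `t*_{𝓛,β}(Γ)` for a distributional function `Γ`. -/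
def tLstarDist (n k m : ℕ) (L : Fin m → Fin k → ZMod p) (β : Fin m → ZMod p)
    (Γ : (Fin n → ZMod p) → ZMod p → ℝ) : ℂ :=
  expC (fun X : Fin k → Fin n → ZMod p => ∏ i, aC p (β i) (Γ (applyLF p n k (L i) X)))

/-- The probability of sampling the function `F` from the distributional function `Γ`
(independently at each point). -/
def probFun (n : ℕ) (Γ : (Fin n → ZMod p) → ZMod p → ℝ)
    (F : (Fin n → ZMod p) → ZMod p) : ℝ :=
  ∏ x, Γ x (F x)

/-- Conditional expectation of a distributional function w.r.t. the polynomial factor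
defined by `P₁, …, P_C`. -/
def condExpDist (n C : ℕ) (P : Fin C → (Fin n → ZMod p) → ZMod p)
    (Γ : (Fin n → ZMod p) → ZMod p → ℝ) : (Fin n → ZMod p) → ZMod p → ℝ :=
  fun x c =>
    (∑ y ∈ Finset.univ.filter (fun y : Fin n → ZMod p => ∀ j, P j y = P j x), Γ y c) /
    ((Finset.univ.filter (fun y : Fin n → ZMod p => ∀ j, P j y = P j x)).card : ℝ)

/-- Connectivity of a system of linear forms given as a tuple. -/
def ConnectedSystem (k m : ℕ) (L : Fin m → Fin k → ZMod p) : Prop :=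
  ∀ S : Finset (Fin m), S.Nonempty → S ≠ Finset.univ →
    Submodule.span (ZMod p) (L '' ↑S) ⊓ Submodule.span (ZMod p) (L '' ↑(Sᶜ)) ≠ ⊥

/-- Isomorphism of two systems of linear forms (given as injective tuples):
a bijection preserving all linear relations, i.e. extending to an invertible linear map
between the spans. -/
def SystemsIso {k₁ m₁ k₂ m₂ : ℕ}
    (L₁ : Fin m₁ → Fin k₁ → ZMod p) (L₂ : Fin m₂ → Fin k₂ → ZMod p) : Prop :=
  ∃ σ : Fin m₁ ≃ Fin m₂, ∀ c : Fin m₁ → ZMod p,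
    (∑ i, c i • L₁ i) = 0 ↔ (∑ i, c i • L₂ (σ i)) = 0

/-- Connectivity of a system of linear forms given as a finite set. -/
def ConnectedFinset {k : ℕ} (𝓛 : Finset (Fin k → ZMod p)) : Prop :=
  ∀ S : Finset (Fin k → ZMod p), S ⊆ 𝓛 → S.Nonempty → S ≠ 𝓛 →
    Submodule.span (ZMod p) (S : Set (Fin k → ZMod p)) ⊓
      Submodule.span (ZMod p) ((𝓛 \ S : Finset (Fin k → ZMod p)) : Set (Fin k → ZMod p)) ≠ ⊥

/-- Isomorphism of two systems of linear forms given as finite sets. -/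
def FinsetIso {k₁ k₂ : ℕ}
    (A : Finset (Fin k₁ → ZMod p)) (B : Finset (Fin k₂ → ZMod p)) : Prop :=
  ∃ e : {x // x ∈ A} ≃ {x // x ∈ B}, ∀ c : {x // x ∈ A} → ZMod p,
    (∑ x : {x // x ∈ A}, c x • (x : Fin k₁ → ZMod p)) = 0 ↔
    (∑ x : {x // x ∈ A}, c x • ((e x : Fin k₂ → ZMod p))) = 0

/-- Isomorphism of two 1-flagged systems of linear forms: a relation-preserving bijection
whose linear extension carries one flag to the other. -/
def FlaggedIso {k₁ k₂ : ℕ}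
    (A : Finset (Fin k₁ → ZMod p)) (M₁ : Fin k₁ → ZMod p)
    (B : Finset (Fin k₂ → ZMod p)) (M₂ : Fin k₂ → ZMod p) : Prop :=
  ∃ e : {x // x ∈ A} ≃ {x // x ∈ B},
    (∀ c : {x // x ∈ A} → ZMod p,
      (∑ x : {x // x ∈ A}, c x • (x : Fin k₁ → ZMod p)) = 0 ↔
      (∑ x : {x // x ∈ A}, c x • ((e x : Fin k₂ → ZMod p))) = 0) ∧
    (∀ c : {x // x ∈ A} → ZMod p,
      (∑ x : {x // x ∈ A}, c x • (x : Fin k₁ → ZMod p)) = M₁ →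
      (∑ x : {x // x ∈ A}, c x • ((e x : Fin k₂ → ZMod p))) = M₂)

/-- The underlying (unflagged) system of the product of two 1-flagged systems,
relative to the chosen surjection `T`. -/
def productSystem {k₀ k₁ : ℕ}
    (𝓛₀ : Finset (Fin k₀ → ZMod p)) (𝓛₁ : Finset (Fin k₁ → ZMod p))
    (T : (Fin (k₀ + k₁) → ZMod p) →ₗ[ZMod p] (Fin (k₀ + k₁ - 1) → ZMod p)) :
    Finset (Fin (k₀ + k₁ - 1) → ZMod p) :=
  (𝓛₀.image (fun L => Fin.append L (0 : Fin k₁ → ZMod p)) ∪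
    𝓛₁.image (fun L => Fin.append (0 : Fin k₀ → ZMod p) L)).image (fun v => T v)

/-- `f^{(𝓛∖{Lᵢ})^{Lᵢ}}(x)`: conditional average of `∏_{j ≠ i} f(L_j(X))` given `Lᵢ(X) = x`. -/
def flagCondAvg (n k m : ℕ) (L : Fin m → Fin k → ZMod p) (i : Fin m)
    (f : (Fin n → ZMod p) → ℂ) (x : Fin n → ZMod p) : ℂ :=
  (∑ X ∈ Finset.univ.filter (fun X : Fin k → Fin n → ZMod p => applyLF p n k (L i) X = x),
      ∏ j ∈ Finset.univ.erase i, f (applyLF p n k (L j) X)) /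
  (((Finset.univ.filter
      (fun X : Fin k → Fin n → ZMod p => applyLF p n k (L i) X = x)).card : ℂ))

/-- `f^{∂𝓛}(x) = Σ_{L ∈ 𝓛} f^{(𝓛∖{L})^L}(x)`. -/
def partialL (n k m : ℕ) (L : Fin m → Fin k → ZMod p)
    (f : (Fin n → ZMod p) → ℂ) (x : Fin n → ZMod p) : ℂ :=
  ∑ i, flagCondAvg p n k m L i f x

/-- Real-valued version of `flagCondAvg`. -/
def flagCondAvgR (n k m : ℕ) (L : Fin m → Fin k → ZMod p) (i : Fin m)
    (f : (Fin n → ZMod p) → ℝ) (x : Fin n → ZMod p) : ℝ :=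
  (∑ X ∈ Finset.univ.filter (fun X : Fin k → Fin n → ZMod p => applyLF p n k (L i) X = x),
      ∏ j ∈ Finset.univ.erase i, f (applyLF p n k (L j) X)) /
  (((Finset.univ.filter
      (fun X : Fin k → Fin n → ZMod p => applyLF p n k (L i) X = x)).card : ℝ))

/-- Real-valued version of `partialL`. -/
def partialLR (n k m : ℕ) (L : Fin m → Fin k → ZMod p)
    (f : (Fin n → ZMod p) → ℝ) (x : Fin n → ZMod p) : ℝ :=
  ∑ i, flagCondAvgR p n k m L i f x

/-- `t_𝓛` viewed as a formal polynomial in the variables `{f(x) : x ∈ F_p^n}`. -/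
def tLPoly (n k m : ℕ) (L : Fin m → Fin k → ZMod p) :
    MvPolynomial (Fin n → ZMod p) ℂ :=
  MvPolynomial.C (((p : ℂ) ^ (n * k))⁻¹) *
    ∑ X : Fin k → Fin n → ZMod p, ∏ i, MvPolynomial.X (applyLF p n k (L i) X)


lemma applyLF_add' (n k : ℕ) (ℓ : Fin k → ZMod p) (X Y : Fin k → Fin n → ZMod p) :
    applyLF p n k ℓ (X + Y) = applyLF p n k ℓ X + applyLF p n k ℓ Y := by
  simp [applyLF, smul_add, Finset.sum_add_distrib]

lemma applyLF_surj' (hp : p.Prime) (n k : ℕ) (ℓ : Fin k → ZMod p) (hℓ : ℓ ≠ 0)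
    (x : Fin n → ZMod p) : ∃ c, applyLF p n k ℓ c = x := by
  haveI := Fact.mk hp
  obtain ⟨j, hj⟩ : ∃ j, ℓ j ≠ 0 := by
    by_contra h; push_neg at h; exact hℓ (funext h)
  refine ⟨fun i => if i = j then (ℓ j)⁻¹ • x else 0, ?_⟩
  rw [applyLF, Finset.sum_eq_single j]
  · simp [smul_smul, mul_inv_cancel₀ hj]
  · intro b _ hb; simp [hb]
  · simp

lemma fiber_card_const (hp : p.Prime) (n k : ℕ) (ℓ : Fin k → ZMod p) (hℓ : ℓ ≠ 0)
    (x y : Fin n → ZMod p) :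
    (Finset.univ.filter (fun X : Fin k → Fin n → ZMod p => applyLF p n k ℓ X = x)).card =
    (Finset.univ.filter (fun X : Fin k → Fin n → ZMod p => applyLF p n k ℓ X = y)).card := by
  classical
  obtain ⟨c, hc⟩ := applyLF_surj' p hp n k ℓ hℓ (y - x)
  apply Finset.card_bij (fun X _ => X + c)
  · intro X hX
    simp only [Finset.mem_filter, Finset.mem_univ, true_and] at hX ⊢
    rw [applyLF_add', hX, hc]; abel
  · intro a _ b _ h; exact add_right_cancel h
  · intro b hb
    simp only [Finset.mem_filter, Finset.mem_univ, true_and] at hb ⊢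
    refine ⟨b - c, ?_, by abel⟩
    have h2 := applyLF_add' p n k ℓ (b - c) c
    rw [sub_add_cancel, hb, hc] at h2
    have : applyLF p n k ℓ (b - c) = y - (y - x) := by
      rw [eq_sub_iff_add_eq, ← h2]
    simpa using this

/-- Lemma 6.9: derivative of `t_𝓛` along a perturbation.
For `f, g : F_p^n → ℂ` and a system `𝓛` of (nonzero) linear forms, the derivative at
`t = 0` of `t ↦ t_𝓛(f + t·g)` equals `E_X[g(X) · f^{∂𝓛}(X)]`. -/
theorem statement18 (p n k m : ℕ) [NeZero p] (hp : p.Prime)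
    (L : Fin m → Fin k → ZMod p) (hinj : Function.Injective L) (hnz : ∀ i, L i ≠ 0)
    (f g : (Fin n → ZMod p) → ℂ) :
    HasDerivAt (fun t : ℝ => tL p n k m L (fun x => f x + (t : ℂ) * g x))
      (expC (fun x => g x * partialL p n k m L f x)) 0 := by
  classical
  haveI := Fact.mk hp
  have hderiv : HasDerivAt (fun t : ℝ => tL p n k m L (fun x => f x + (t : ℂ) * g x))
      ((∑ X : Fin k → Fin n → ZMod p, ∑ i,
        (∏ j ∈ Finset.univ.erase i, f (applyLF p n k (L j) X)) * g (applyLF p n k (L i) X)) /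
        (Fintype.card (Fin k → Fin n → ZMod p) : ℂ)) 0 := by
    unfold tL expC
    refine HasDerivAt.div_const ?_ _
    refine HasDerivAt.fun_sum ?_
    intro X _
    have h := HasDerivAt.fun_finsetProd (𝕜 := ℝ) (x := (0 : ℝ))
      (u := (Finset.univ : Finset (Fin m)))
      (f := fun i (t : ℝ) => f (applyLF p n k (L i) X) + (t : ℂ) * g (applyLF p n k (L i) X))
      (f' := fun i => g (applyLF p n k (L i) X)) ?_
    · simpa [smul_eq_mul] using h
    · intro i _
      have h1 : HasDerivAt (fun t : ℝ => (t : ℂ)) 1 0 := by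
        simpa using (hasDerivAt_id (0 : ℝ)).ofReal_comp
      simpa using (h1.mul_const (g (applyLF p n k (L i) X))).const_add (f (applyLF p n k (L i) X))
  convert hderiv using 1
  set q := Fintype.card (Fin n → ZMod p) with hq
  have hq0 : (q : ℂ) ≠ 0 := by
    have : q ≠ 0 := Fintype.card_ne_zero
    exact_mod_cast this
  set c : Fin m → ℕ := fun i => (Finset.univ.filter
      (fun X : Fin k → Fin n → ZMod p => applyLF p n k (L i) X = 0)).card with hcdef
  have hfib : ∀ (i : Fin m) (x : Fin n → ZMod p),
      (Finset.univ.filter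
        (fun X : Fin k → Fin n → ZMod p => applyLF p n k (L i) X = x)).card = c i :=
    fun i x => fiber_card_const p hp n k (L i) (hnz i) x 0
  have hc0 : ∀ i, (c i : ℂ) ≠ 0 := by
    intro i
    obtain ⟨X, hX⟩ := applyLF_surj' p hp n k (L i) (hnz i) 0
    have : 0 < c i := Finset.card_pos.mpr ⟨X, by simp [hX]⟩
    exact_mod_cast this.ne'
  have hN : ∀ i, (Fintype.card (Fin k → Fin n → ZMod p) : ℂ) = (q : ℂ) * (c i : ℂ) := by
    intro i
    have h0 := Finset.card_eq_sum_card_fiberwise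
      (s := (Finset.univ : Finset (Fin k → Fin n → ZMod p)))
      (t := (Finset.univ : Finset (Fin n → ZMod p)))
      (f := fun X => applyLF p n k (L i) X) (fun x _ => Finset.mem_univ _)
    rw [Finset.card_univ] at h0
    have : Fintype.card (Fin k → Fin n → ZMod p) = q * c i := by
      rw [h0]
      simp only [hfib i, Finset.sum_const, Finset.card_univ, smul_eq_mul]
      rfl
    rw [this]; push_cast; ring
  have key : ∀ i : Fin m,
      (∑ x : Fin n → ZMod p, g x * flagCondAvg p n k m L i f x)
      = (∑ X : Fin k → Fin n → ZMod p,
          (∏ j ∈ Finset.univ.erase i, f (applyLF p n k (L j) X)) * g (applyLF p n k (L i) X)) /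
        (c i : ℂ) := by
    intro i
    have h1 : ∀ x : Fin n → ZMod p, g x * flagCondAvg p n k m L i f x
        = (∑ X ∈ Finset.univ.filter
            (fun X : Fin k → Fin n → ZMod p => applyLF p n k (L i) X = x),
            (∏ j ∈ Finset.univ.erase i, f (applyLF p n k (L j) X)) *
              g (applyLF p n k (L i) X)) / (c i : ℂ) := by
      intro x
      unfold flagCondAvg
      rw [hfib i x, mul_div_assoc', Finset.mul_sum]
      congr 1
      refine Finset.sum_congr rfl ?_
      intro X hX
      simp only [Finset.mem_filter, Finset.mem_univ, true_and] at hX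
      rw [hX]; ring
    calc (∑ x : Fin n → ZMod p, g x * flagCondAvg p n k m L i f x)
        = ∑ x : Fin n → ZMod p, (∑ X ∈ Finset.univ.filter
            (fun X : Fin k → Fin n → ZMod p => applyLF p n k (L i) X = x),
            (∏ j ∈ Finset.univ.erase i, f (applyLF p n k (L j) X)) *
              g (applyLF p n k (L i) X)) / (c i : ℂ) := by
          exact Finset.sum_congr rfl fun x _ => h1 x
      _ = (∑ x : Fin n → ZMod p, ∑ X ∈ Finset.univ.filter
            (fun X : Fin k → Fin n → ZMod p => applyLF p n k (L i) X = x),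
            (∏ j ∈ Finset.univ.erase i, f (applyLF p n k (L j) X)) *
              g (applyLF p n k (L i) X)) / (c i : ℂ) := by
          rw [Finset.sum_div]
      _ = _ := by
          rw [Finset.sum_fiberwise_of_maps_to (fun X _ => Finset.mem_univ _)]
  calc expC (fun x => g x * partialL p n k m L f x)
      = (∑ x : Fin n → ZMod p, ∑ i, g x * flagCondAvg p n k m L i f x) / (q : ℂ) := by
        unfold expC partialL
        rw [hq]
        congr 1
        exact Finset.sum_congr rfl fun x _ => Finset.mul_sum _ _ _
    _ = (∑ i, ∑ x : Fin n → ZMod p, g x * flagCondAvg p n k m L i f x) / (q : ℂ) := by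
        rw [Finset.sum_comm]
    _ = ∑ i, (∑ X : Fin k → Fin n → ZMod p,
          (∏ j ∈ Finset.univ.erase i, f (applyLF p n k (L j) X)) *
            g (applyLF p n k (L i) X)) / ((q : ℂ) * (c i : ℂ)) := by
        rw [Finset.sum_div]
        refine Finset.sum_congr rfl fun i _ => ?_
        rw [key i, div_div, mul_comm]
    _ = ∑ i, (∑ X : Fin k → Fin n → ZMod p,
          (∏ j ∈ Finset.univ.erase i, f (applyLF p n k (L j) X)) *
            g (applyLF p n k (L i) X)) /
          (Fintype.card (Fin k → Fin n → ZMod p) : ℂ) := by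
        refine Finset.sum_congr rfl fun i _ => ?_
        rw [hN i]
    _ = _ := by
        rw [← Finset.sum_div, Finset.sum_comm]


end Paper
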